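/- A row-finite locally convex k-graph Λ is cofinal if and only if for every v, w ∈ Λ^0 there exists n ∈ ℕ^k such that vΛs(α) ≠ ∅ for every α ∈ wΛ^{≤n}. -/

import Mathlib

/-- A `k`-graph: a countable category `Λ` with a degree functor `d : Λ → ℕ^k`
satisfying the factorisation property. Morphisms form the type `Mor`,
objects (vertices) the type `Obj`. -/
structure KGraph (k : ℕ) where
  Obj : Type
  Mor : Type
  countableObj : Countable Obj
  countableMor : Countable Mor
  r : Mor → Obj
  s : Mor → Obj
  d : Mor → (Fin k → ℕ)
  id : Obj → Mor
  comp : ∀ μ ν : Mor, s μ = r ν → Mor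
  r_id : ∀ v, r (id v) = v
  s_id : ∀ v, s (id v) = v
  d_id : ∀ v, d (id v) = 0
  r_comp : ∀ μ ν h, r (comp μ ν h) = r μ
  s_comp : ∀ μ ν h, s (comp μ ν h) = s ν
  d_comp : ∀ μ ν h, d (comp μ ν h) = d μ + d ν
  id_comp : ∀ μ : Mor, comp (id (r μ)) μ (s_id (r μ)) = μ
  comp_id : ∀ μ : Mor, comp μ (id (s μ)) ((r_id (s μ)).symm) = μ
  assoc : ∀ (μ ν ρ : Mor) (h₁ : s μ = r ν) (h₂ : s ν = r ρ),
    comp (comp μ ν h₁) ρ ((s_comp μ ν h₁).trans h₂)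
      = comp μ (comp ν ρ h₂) (h₁.trans (r_comp ν ρ h₂).symm)
  factor : ∀ (lam : Mor) (m n : Fin k → ℕ), d lam = m + n →
    ∃! p : {q : Mor × Mor // s q.1 = r q.2},
      d p.val.1 = m ∧ d p.val.2 = n ∧ lam = comp p.val.1 p.val.2 p.property

namespace KGraph

variable {k : ℕ} (Λ : KGraph k)

/-- `μ` is an initial segment of `lam`, i.e. `lam = μρ` for some `ρ`. -/
def InitSeg (μ lam : Λ.Mor) : Prop :=
  ∃ (ρ : Λ.Mor) (h : Λ.s μ = Λ.r ρ), lam = Λ.comp μ ρ h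

/-- The set of minimal common extensions of `μ` and `ν`. -/
def MCE (μ ν : Λ.Mor) : Set Λ.Mor :=
  {lam | Λ.d lam = Λ.d μ ⊔ Λ.d ν ∧ Λ.InitSeg μ lam ∧ Λ.InitSeg ν lam}

/-- `Λ` is finitely aligned if all `MCE` sets are finite. -/
def FinitelyAligned : Prop := ∀ μ ν : Λ.Mor, (Λ.MCE μ ν).Finite

/-- Aperiodicity: distinct paths with the same source admit a common
extension `τ` with `MCE (ατ, βτ) = ∅`. -/
def Aperiodic : Prop :=
  ∀ α β : Λ.Mor, α ≠ β → Λ.s α = Λ.s β →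
    ∃ (τ : Λ.Mor) (hα : Λ.s α = Λ.r τ) (hβ : Λ.s β = Λ.r τ),
      Λ.MCE (Λ.comp α τ hα) (Λ.comp β τ hβ) = ∅

/-- `E` is a finite exhaustive subset of `vΛ`. -/
def IsFE (v : Λ.Obj) (E : Set Λ.Mor) : Prop :=
  E.Finite ∧ (∀ α ∈ E, Λ.r α = v) ∧
    ∀ μ : Λ.Mor, Λ.r μ = v → ∃ lam ∈ E, (Λ.MCE μ lam).Nonempty

/-- The segment `lam(p,q)` of a path `lam`, for `p ≤ q ≤ d lam`,
obtained from the factorisation property. -/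
noncomputable def seg (lam : Λ.Mor) (p q : Fin k → ℕ) (hpq : p ≤ q) (hq : q ≤ Λ.d lam) :
    Λ.Mor := by
  have h1 : Λ.d lam = p + (Λ.d lam - p) := by
    funext i; exact (Nat.add_sub_cancel' ((hpq.trans hq) i)).symm
  have hspec := (Λ.factor lam p (Λ.d lam - p) h1).exists.choose_spec
  refine (Λ.factor ((Λ.factor lam p (Λ.d lam - p) h1).exists.choose).val.2
      (q - p) (Λ.d lam - q) ?_).exists.choose.val.1
  rw [hspec.2.1]
  funext i
  have h3 : p i ≤ q i := hpq i
  have h4 : q i ≤ Λ.d lam i := hq i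
  simp only [Pi.sub_apply, Pi.add_apply]
  omega

/-- A (possibly infinite) path in `Λ`: a degree-preserving functor from
`Ω_{k,m}` (for `m = deg ∈ (ℕ ∪ {∞})^k`) to `Λ`, recorded by its segments. -/
structure InfPath (Λ : KGraph k) where
  deg : Fin k → ℕ∞
  seg : ∀ p q : Fin k → ℕ, p ≤ q → (∀ i, (q i : ℕ∞) ≤ deg i) → Λ.Mor
  d_seg : ∀ p q hpq hq, Λ.d (seg p q hpq hq) = q - p
  comp_seg : ∀ (p q r : Fin k → ℕ) (hpq : p ≤ q) (hqr : q ≤ r)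
      (hq : ∀ i, (q i : ℕ∞) ≤ deg i) (hr : ∀ i, (r i : ℕ∞) ≤ deg i),
    ∃ h : Λ.s (seg p q hpq hq) = Λ.r (seg q r hqr hr),
      Λ.comp (seg p q hpq hq) (seg q r hqr hr) h = seg p r (hpq.trans hqr) hr

/-- The vertex `x(n)` of an infinite path. -/
def InfPath.vert {Λ : KGraph k} (x : Λ.InfPath) (n : Fin k → ℕ) (hn : ∀ i, (n i : ℕ∞) ≤ x.deg i) : Λ.Obj :=
  Λ.r (x.seg n n le_rfl hn)

/-- The range `r(x) = x(0)` of an infinite path. -/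
def InfPath.rng {Λ : KGraph k} (x : Λ.InfPath) : Λ.Obj :=
  Λ.r (x.seg 0 0 le_rfl (fun i => by simp))

/-- `x` is a boundary path: it hits every finite exhaustive set. -/
def IsBoundary (x : Λ.InfPath) : Prop :=
  ∀ (n : Fin k → ℕ) (hn : ∀ i, (n i : ℕ∞) ≤ x.deg i) (E : Set Λ.Mor),
    Λ.IsFE (x.vert n hn) E →
    ∃ (p : Fin k → ℕ) (hp : ∀ i, ((n + p) i : ℕ∞) ≤ x.deg i),
      x.seg n (n + p) le_self_add hp ∈ E

/-- The set of boundary paths with range `v` is `v∂Λ`. -/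

private lemma enat_aux {a b : ℕ} {D : ℕ∞} (h2 : (a : ℕ∞) ≤ D) (h1 : (b : ℕ∞) ≤ D - a) :
    ((a + b : ℕ) : ℕ∞) ≤ D := by
  cases D with
  | top => exact le_top
  | coe dN =>
    have ha : a ≤ dN := by exact_mod_cast h2
    rw [← ENat.coe_sub] at h1
    have hb : b ≤ dN - a := by exact_mod_cast h1
    exact_mod_cast (by omega : a + b ≤ dN)

/-- The shifted path `σ^m(x)`. -/
def InfPath.shift {Λ : KGraph k} (x : Λ.InfPath) (m : Fin k → ℕ) (hm : ∀ i, (m i : ℕ∞) ≤ x.deg i) :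
    Λ.InfPath where
  deg := fun i => x.deg i - (m i : ℕ∞)
  seg := fun p q hpq hq => x.seg (m + p) (m + q) (add_le_add_right hpq m)
    (fun i => by
      have := enat_aux (hm i) (hq i)
      simpa using this)
  d_seg := fun p q hpq hq => by
    rw [x.d_seg]
    funext i
    simp only [Pi.sub_apply, Pi.add_apply]
    omega
  comp_seg := fun p q r hpq hqr hq hr =>
    x.comp_seg (m + p) (m + q) (m + r) (add_le_add_right hpq m) (add_le_add_right hqr m) _ _

/-- `w = lam · z` : the path `w` extends `z` by the finite path `lam`,
i.e. `w(0, d lam) = lam` and `σ^{d lam}(w) = z`. -/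
def InfPath.ExtendsBy {Λ : KGraph k} (w z : Λ.InfPath) (lam : Λ.Mor) : Prop :=
  ∃ h : ∀ i, ((Λ.d lam) i : ℕ∞) ≤ w.deg i,
    w.seg 0 (Λ.d lam) zero_le h = lam ∧ w.shift (Λ.d lam) h = z

/-- Local periodicity `m, n` at `v`. -/
def LocalPeriodicity (m n : Fin k → ℕ) (v : Λ.Obj) : Prop :=
  ∀ x : Λ.InfPath, Λ.IsBoundary x → x.rng = v →
    (∀ i, (((m ⊔ n) i : ℕ) : ℕ∞) ≤ x.deg i) ∧
    ∃ (hm : ∀ i, (m i : ℕ∞) ≤ x.deg i) (hn : ∀ i, (n i : ℕ∞) ≤ x.deg i),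
      x.shift m hm = x.shift n hn

/-- Cofinality of `Λ`, stated in terms of finite paths. -/
def Cofinal : Prop :=
  ∀ v w : Λ.Obj, ∃ E : Set Λ.Mor, Λ.IsFE w E ∧
    ∀ α ∈ E, ∃ lam : Λ.Mor, Λ.r lam = v ∧ Λ.s lam = Λ.s α


/-- Membership in `Λ^{≤ n}`. -/
def LeSet (lam : Λ.Mor) (n : Fin k → ℕ) : Prop :=
  Λ.d lam ≤ n ∧ ∀ i : Fin k, Λ.d lam i < n i →
    ¬ ∃ g : Λ.Mor, Λ.d g = Pi.single i 1 ∧ Λ.r g = Λ.s lam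

/-- Local convexity of `Λ`. -/
def LocallyConvex : Prop :=
  ∀ (i j : Fin k), i ≠ j → ∀ e f : Λ.Mor,
    Λ.d e = Pi.single i 1 → Λ.d f = Pi.single j 1 → Λ.r e = Λ.r f →
      (∃ g, Λ.d g = Pi.single j 1 ∧ Λ.r g = Λ.s e) ∧
      (∃ g, Λ.d g = Pi.single i 1 ∧ Λ.r g = Λ.s f)

/-- Row-finiteness of `Λ`. -/
def RowFinite : Prop :=
  ∀ (v : Λ.Obj) (n : Fin k → ℕ), {lam : Λ.Mor | Λ.r lam = v ∧ Λ.d lam = n}.Finite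

private lemma eq_id_of_d_zero (lam : Λ.Mor) (h : Λ.d lam = 0) : lam = Λ.id (Λ.r lam) := by
  have hfac := Λ.factor lam 0 0 (by rw [h]; simp)
  have h1 : (⟨(Λ.id (Λ.r lam), lam), by rw [Λ.s_id]⟩ :
        {q : Λ.Mor × Λ.Mor // Λ.s q.1 = Λ.r q.2})
      = ⟨(lam, Λ.id (Λ.s lam)), (Λ.r_id (Λ.s lam)).symm⟩ :=
    hfac.unique ⟨Λ.d_id _, h, (Λ.id_comp lam).symm⟩ ⟨h, Λ.d_id _, (Λ.comp_id lam).symm⟩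
  have := congrArg (fun p : {q : Λ.Mor × Λ.Mor // Λ.s q.1 = Λ.r q.2} => p.val.1) h1
  simpa using this.symm

private lemma s_eq_r_of_d_zero (lam : Λ.Mor) (h : Λ.d lam = 0) : Λ.s lam = Λ.r lam := by
  conv_lhs => rw [Λ.eq_id_of_d_zero lam h]
  exact Λ.s_id _

private lemma comp_congr {μ₁ μ₂ ν₁ ν₂ : Λ.Mor} (hμ : μ₁ = μ₂) (hν : ν₁ = ν₂)
    (h₁ : Λ.s μ₁ = Λ.r ν₁) :
    Λ.comp μ₁ ν₁ h₁ = Λ.comp μ₂ ν₂ (hμ ▸ hν ▸ h₁) := by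
  subst hμ; subst hν; rfl

private lemma exists_initSeg (lam : Λ.Mor) (m : Fin k → ℕ) (h : m ≤ Λ.d lam) :
    ∃ μ, Λ.InitSeg μ lam ∧ Λ.d μ = m := by
  have hd : Λ.d lam = m + (Λ.d lam - m) := by
    funext i
    simp only [Pi.add_apply, Pi.sub_apply]
    exact (Nat.add_sub_cancel' (h i)).symm
  obtain ⟨⟨⟨μ, ρ⟩, hsr⟩, ⟨h1, h2, h3⟩, -⟩ := Λ.factor lam m (Λ.d lam - m) hd
  exact ⟨μ, ⟨ρ, hsr, h3⟩, h1⟩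

private lemma initSeg_unique {μ₁ μ₂ lam : Λ.Mor} (hd : Λ.d μ₁ = Λ.d μ₂)
    (h₁ : Λ.InitSeg μ₁ lam) (h₂ : Λ.InitSeg μ₂ lam) : μ₁ = μ₂ := by
  obtain ⟨ρ₁, hs₁, he₁⟩ := h₁
  obtain ⟨ρ₂, hs₂, he₂⟩ := h₂
  have hdl : Λ.d lam = Λ.d μ₁ + Λ.d ρ₁ := by rw [he₁, Λ.d_comp]
  have hdl₂ : Λ.d lam = Λ.d μ₂ + Λ.d ρ₂ := by rw [he₂, Λ.d_comp]
  have hd2 : Λ.d ρ₂ = Λ.d ρ₁ := by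
    funext i
    have a := congrFun hdl i; have b := congrFun hdl₂ i; have c := congrFun hd i
    simp only [Pi.add_apply] at a b
    omega
  have := (Λ.factor lam (Λ.d μ₁) (Λ.d ρ₁) hdl).unique
    (y₁ := ⟨(μ₁, ρ₁), hs₁⟩) (y₂ := ⟨(μ₂, ρ₂), hs₂⟩)
    ⟨rfl, rfl, he₁⟩ ⟨hd.symm, hd2, he₂⟩
  exact congrArg (fun p : {q : Λ.Mor × Λ.Mor // Λ.s q.1 = Λ.r q.2} => p.val.1) this

private lemma initSeg_trans {a b c : Λ.Mor} (h₁ : Λ.InitSeg a b) (h₂ : Λ.InitSeg b c) :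
    Λ.InitSeg a c := by
  obtain ⟨ρ, hs, he⟩ := h₁
  obtain ⟨σ, hs', he'⟩ := h₂
  have hρσ : Λ.s ρ = Λ.r σ := by rw [he, Λ.s_comp] at hs'; exact hs'
  refine ⟨Λ.comp ρ σ hρσ, by rw [Λ.r_comp]; exact hs, ?_⟩
  rw [he', ← Λ.assoc a ρ σ hs hρσ]
  exact Λ.comp_congr he rfl hs'

private lemma r_of_initSeg {a b : Λ.Mor} (h : Λ.InitSeg a b) : Λ.r b = Λ.r a := by
  obtain ⟨ρ, hs, he⟩ := h; rw [he, Λ.r_comp]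

/-- Propagation of an edge of colour `i` along a path of `i`-degree zero,
using local convexity. -/
private lemma edge_propagate (hlc : Λ.LocallyConvex) (i : Fin k) :
    ∀ (N : ℕ) (ρ g : Λ.Mor), (∑ j, Λ.d ρ j) = N → Λ.d ρ i = 0 →
      Λ.d g = Pi.single i 1 → Λ.r g = Λ.r ρ →
      ∃ g', Λ.d g' = Pi.single i 1 ∧ Λ.r g' = Λ.s ρ := by
  intro N
  induction N with
  | zero =>
    intro ρ g hN hρ hg hr
    have hd0 : Λ.d ρ = 0 := by
      funext j
      have := Finset.sum_eq_zero_iff.mp hN j (Finset.mem_univ j)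
      simpa using this
    exact ⟨g, hg, by rw [Λ.s_eq_r_of_d_zero ρ hd0]; exact hr⟩
  | succ N ih =>
    intro ρ g hN hρ hg hr
    have hex : ∃ j, 0 < Λ.d ρ j := by
      by_contra hc
      push_neg at hc
      have : ∑ j, Λ.d ρ j = 0 := Finset.sum_eq_zero (fun j _ => Nat.le_zero.mp (hc j))
      omega
    obtain ⟨j, hj⟩ := hex
    have hij : i ≠ j := by rintro rfl; omega
    have hd : Λ.d ρ = Pi.single j 1 + (Λ.d ρ - Pi.single j 1) := by
      funext l
      by_cases hl : l = j
      · subst hl; simp only [Pi.add_apply, Pi.sub_apply, Pi.single_eq_same]; omega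
      · simp [Pi.single_eq_of_ne hl]
    obtain ⟨⟨⟨f, ρ'⟩, hsr⟩, ⟨hdf, hdρ', heρ⟩, -⟩ :=
      Λ.factor ρ (Pi.single j 1) (Λ.d ρ - Pi.single j 1) hd
    have hrf : Λ.r f = Λ.r ρ := by rw [heρ, Λ.r_comp]
    obtain ⟨-, g', hdg', hrg'⟩ := hlc i j hij g f hg hdf (hr.trans hrf.symm)
    have hsum : ∑ l, Λ.d ρ' l = N := by
      have h1 : ∀ l, Λ.d ρ' l + (Pi.single j 1 : Fin k → ℕ) l = Λ.d ρ l := by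
        intro l
        rw [hdρ']
        by_cases hl : l = j
        · subst hl; simp only [Pi.sub_apply, Pi.single_eq_same]; omega
        · simp [Pi.single_eq_of_ne hl]
      have h2 : ∑ l, (Λ.d ρ' l + (Pi.single j 1 : Fin k → ℕ) l) = N + 1 := by
        rw [Finset.sum_congr rfl (fun l _ => h1 l)]; exact hN
      rw [Finset.sum_add_distrib] at h2
      have h3 : ∑ l, (Pi.single j 1 : Fin k → ℕ) l = 1 := by
        simp [Pi.single_apply]
      omega
    have hρ'i : Λ.d ρ' i = 0 := by
      rw [hdρ']
      simp only [Pi.sub_apply, Pi.single_eq_of_ne hij.symm]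
      omega
    obtain ⟨g'', hdg'', hrg''⟩ := ih ρ' g' hsum hρ'i hdg' (hrg'.trans hsr)
    refine ⟨g'', hdg'', ?_⟩
    rw [hrg'', heρ, Λ.s_comp]

/-- Existence of paths in `uΛ^{≤ m}`. -/
private lemma exists_leSet :
    ∀ (N : ℕ) (u : Λ.Obj) (m : Fin k → ℕ), (∑ i, m i) ≤ N →
      ∃ τ, Λ.r τ = u ∧ Λ.LeSet τ m := by
  intro N
  induction N with
  | zero =>
    intro u m hm
    refine ⟨Λ.id u, Λ.r_id u, ?_, ?_⟩
    · intro i; rw [Λ.d_id]; exact Nat.zero_le _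
    · intro i hi
      rw [Λ.d_id] at hi
      have : m i ≤ ∑ l, m l := Finset.single_le_sum (fun l _ => Nat.zero_le _) (Finset.mem_univ i)
      simp only [Pi.zero_apply] at hi
      omega
  | succ N ih =>
    intro u m hm
    by_cases hex : ∃ i, 0 < m i ∧ ∃ g, Λ.d g = Pi.single i 1 ∧ Λ.r g = u
    · obtain ⟨i, hi, g, hdg, hrg⟩ := hex
      have hsum : ∑ l, (m - (Pi.single i 1 : Fin k → ℕ)) l ≤ N := by
        have h1 : ∀ l, (m - (Pi.single i 1 : Fin k → ℕ)) l + (Pi.single i 1 : Fin k → ℕ) l = m l := by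
          intro l
          by_cases hl : l = i
          · subst hl; simp only [Pi.sub_apply, Pi.single_eq_same]; omega
          · simp [Pi.single_eq_of_ne hl]
        have h2 : ∑ l, ((m - (Pi.single i 1 : Fin k → ℕ)) l + (Pi.single i 1 : Fin k → ℕ) l) = ∑ l, m l :=
          Finset.sum_congr rfl (fun l _ => h1 l)
        rw [Finset.sum_add_distrib] at h2
        have h3 : ∑ l, (Pi.single i 1 : Fin k → ℕ) l = 1 := by
          simp [Pi.single_apply]
        omega
      obtain ⟨τ', hrτ', hleτ'⟩ := ih (Λ.s g) (m - Pi.single i 1) hsum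
      refine ⟨Λ.comp g τ' hrτ'.symm, by rw [Λ.r_comp]; exact hrg, ?_, ?_⟩
      · intro l
        rw [Λ.d_comp]
        have := hleτ'.1 l
        simp only [Pi.add_apply, Pi.sub_apply] at this ⊢
        rw [hdg]
        by_cases hl : l = i
        · subst hl; simp only [Pi.single_eq_same] at this ⊢; omega
        · simp only [Pi.single_eq_of_ne hl] at this ⊢; omega
      · intro l hl
        rw [Λ.d_comp] at hl
        rw [Λ.s_comp]
        apply hleτ'.2 l
        simp only [Pi.add_apply] at hl
        rw [hdg] at hl
        simp only [Pi.sub_apply]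
        by_cases hli : l = i
        · subst hli; simp only [Pi.single_eq_same] at hl ⊢; omega
        · simp only [Pi.single_eq_of_ne hli] at hl ⊢; omega
    · push_neg at hex
      refine ⟨Λ.id u, Λ.r_id u, ?_, ?_⟩
      · intro i; rw [Λ.d_id]; exact Nat.zero_le _
      · intro i hi
        rw [Λ.d_id] at hi
        simp only [Pi.zero_apply] at hi
        rintro ⟨g, hdg, hrg⟩
        exact hex i hi g hdg (by rw [hrg, Λ.s_id])

private lemma finite_le (hrf : Λ.RowFinite) (w : Λ.Obj) (n : Fin k → ℕ) :
    {α : Λ.Mor | Λ.r α = w ∧ Λ.d α ≤ n}.Finite := by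
  have hfin : {m : Fin k → ℕ | m ≤ n}.Finite := by
    have hsub : {m : Fin k → ℕ | m ≤ n} ⊆ Set.pi Set.univ (fun i => Set.Iic (n i)) := by
      intro m hm i _; exact hm i
    exact (Set.Finite.pi (fun i => Set.finite_Iic (n i))).subset hsub
  have hsub : {α : Λ.Mor | Λ.r α = w ∧ Λ.d α ≤ n} ⊆
      ⋃ m ∈ {m : Fin k → ℕ | m ≤ n}, {α : Λ.Mor | Λ.r α = w ∧ Λ.d α = m} := by
    rintro α ⟨h1, h2⟩
    exact Set.mem_biUnion h2 ⟨h1, rfl⟩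
  exact (hfin.biUnion (fun m _ => hrf w m)).subset hsub

/-- A row-finite locally convex `k`-graph is cofinal iff for all vertices
`v, w` there is `n ∈ ℕ^k` with `vΛs(α) ≠ ∅` for every `α ∈ wΛ^{≤ n}`. -/
theorem row_finite_locally_convex_cofinal_iff
    (hrf : Λ.RowFinite) (hlc : Λ.LocallyConvex) :
    Λ.Cofinal ↔
      ∀ v w : Λ.Obj, ∃ n : Fin k → ℕ,
        ∀ α : Λ.Mor, Λ.r α = w → Λ.LeSet α n →
          ∃ lam : Λ.Mor, Λ.r lam = v ∧ Λ.s lam = Λ.s α := by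
  constructor
  · -- Cofinal → statement with n
    intro hcof v w
    obtain ⟨E, ⟨hEfin, hEr, hEex⟩, hEv⟩ := hcof v w
    refine ⟨fun i => hEfin.toFinset.sup (fun α => Λ.d α i), ?_⟩
    intro α hrα hα
    obtain ⟨β, hβE, τ, hdτ, hIα, hIβ⟩ := hEex α hrα
    have hβle : ∀ i, Λ.d β i ≤ hEfin.toFinset.sup (fun α => Λ.d α i) := fun i =>
      Finset.le_sup (f := fun α => Λ.d α i) (hEfin.mem_toFinset.mpr hβE)
    obtain ⟨α', hsα, heα⟩ := hIα
    have hdcomp : Λ.d τ = Λ.d α + Λ.d α' := by rw [heα, Λ.d_comp]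
    -- every coordinate of d β is ≤ d α
    have hkey : ∀ i, Λ.d β i ≤ Λ.d α i := by
      intro i
      by_contra hlt
      push_neg at hlt
      have hi : Λ.d α i < hEfin.toFinset.sup (fun α => Λ.d α i) := lt_of_lt_of_le hlt (hβle i)
      have hα'pos : 0 < Λ.d α' i := by
        have h1 := congrFun hdcomp i
        have h2 := congrFun hdτ i
        simp only [Pi.add_apply, Pi.sup_apply] at h1 h2
        omega
      have hd' : Λ.d α' = Pi.single i 1 + (Λ.d α' - Pi.single i 1) := by
        funext l
        by_cases hl : l = i
        · subst hl; simp only [Pi.add_apply, Pi.sub_apply, Pi.single_eq_same]; omega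
        · simp [Pi.single_eq_of_ne hl]
      obtain ⟨⟨⟨g, rest⟩, hgr⟩, ⟨hdg, -, heg⟩, -⟩ :=
        Λ.factor α' (Pi.single i 1) (Λ.d α' - Pi.single i 1) hd'
      exact hα.2 i hi ⟨g, hdg, by rw [heg, Λ.r_comp] at hsα; exact hsα.symm⟩
    have hdα'0 : Λ.d α' = 0 := by
      funext i
      have h1 := congrFun hdcomp i
      have h2 := congrFun hdτ i
      have h3 := hkey i
      simp only [Pi.add_apply, Pi.sup_apply, Pi.zero_apply] at h1 h2 ⊢
      omega
    have hsτ : Λ.s τ = Λ.s α := by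
      rw [heα, Λ.s_comp, Λ.s_eq_r_of_d_zero α' hdα'0]
      exact hsα.symm
    obtain ⟨β', hsβ, heβ⟩ := hIβ
    obtain ⟨lam, hrl, hsl⟩ := hEv β hβE
    refine ⟨Λ.comp lam β' (hsl.trans hsβ), by rw [Λ.r_comp]; exact hrl, ?_⟩
    rw [Λ.s_comp]
    rw [heβ, Λ.s_comp] at hsτ
    exact hsτ
  · -- statement with n → Cofinal
    intro h v w
    obtain ⟨n, hn⟩ := h v w
    refine ⟨{α : Λ.Mor | Λ.r α = w ∧ Λ.LeSet α n},
      ⟨(Λ.finite_le hrf w n).subset (fun α hα => ⟨hα.1, hα.2.1⟩),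
       fun α hα => hα.1, ?_⟩,
      fun α hα => hn α hα.1 hα.2⟩
    -- exhaustivity of wΛ^{≤ n}
    intro μ hμ
    obtain ⟨τ, hrτ, hτle⟩ := Λ.exists_leSet (∑ i, ((Λ.d μ ⊔ n) - Λ.d μ) i)
      (Λ.s μ) ((Λ.d μ ⊔ n) - Λ.d μ) le_rfl
    set μτ := Λ.comp μ τ hrτ.symm with hμτdef
    have hdμτ : Λ.d μτ = Λ.d μ + Λ.d τ := Λ.d_comp _ _ _
    have hqle : n ⊓ Λ.d μτ ≤ Λ.d μτ := inf_le_right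
    obtain ⟨lam, hIlam, hdlam⟩ := Λ.exists_initSeg μτ (n ⊓ Λ.d μτ) hqle
    have hIμ : Λ.InitSeg μ μτ := ⟨τ, hrτ.symm, rfl⟩
    refine ⟨lam, ⟨?_, ?_, ?_⟩, ?_⟩
    · -- r lam = w
      rw [← Λ.r_of_initSeg hIlam, hμτdef, Λ.r_comp]
      exact hμ
    · -- d lam ≤ n
      rw [hdlam]; exact inf_le_left
    · -- no extra edges
      intro i hi
      rw [hdlam] at hi
      have hqi : (n ⊓ Λ.d μτ) i = min (n i) (Λ.d μτ i) := rfl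
      have hμτi : Λ.d μτ i < n i := by
        simp only [Pi.inf_apply] at hi
        omega
      have hlami : Λ.d lam i = Λ.d μτ i := by
        rw [hdlam]
        simp only [Pi.inf_apply]
        omega
      obtain ⟨σ', hsσ, heσ⟩ := hIlam
      have hdσ : Λ.d μτ = Λ.d lam + Λ.d σ' := by rw [heσ, Λ.d_comp]
      have hdσi : Λ.d σ' i = 0 := by
        have := congrFun hdσ i
        simp only [Pi.add_apply] at this
        omega
      rintro ⟨g, hdg, hrg⟩
      obtain ⟨g', hdg', hrg'⟩ := Λ.edge_propagate hlc i (∑ j, Λ.d σ' j) σ' g rfl hdσi hdg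
        (by rw [hrg]; exact hsσ)
      have hsσ' : Λ.s σ' = Λ.s τ := by
        have : Λ.s μτ = Λ.s σ' := by rw [heσ, Λ.s_comp]
        rw [← this, hμτdef, Λ.s_comp]
      have hτi : Λ.d τ i < ((Λ.d μ ⊔ n) - Λ.d μ) i := by
        have h1 := congrFun hdμτ i
        simp only [Pi.add_apply] at h1
        simp only [Pi.sub_apply, Pi.sup_apply]
        omega
      exact hτle.2 i hτi ⟨g', hdg', by rw [hrg', hsσ']⟩
    · -- MCE (μ, lam) nonempty
      have hμle : Λ.d μ ≤ Λ.d μτ := by rw [hdμτ]; exact le_self_add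
      obtain ⟨τ₀, hIτ₀, hdτ₀⟩ := Λ.exists_initSeg μτ (Λ.d μ ⊔ (n ⊓ Λ.d μτ))
        (sup_le hμle hqle)
      refine ⟨τ₀, ?_, ?_, ?_⟩
      · rw [hdτ₀, hdlam]
      · obtain ⟨a, hIa, hda⟩ := Λ.exists_initSeg τ₀ (Λ.d μ) (by rw [hdτ₀]; exact le_sup_left)
        have haμ : a = μ := Λ.initSeg_unique hda (Λ.initSeg_trans hIa hIτ₀) hIμ
        exact haμ ▸ hIa
      · obtain ⟨a, hIa, hda⟩ := Λ.exists_initSeg τ₀ (n ⊓ Λ.d μτ)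
          (by rw [hdτ₀]; exact le_sup_right)
        have halam : a = lam := Λ.initSeg_unique (by rw [hda, hdlam])
          (Λ.initSeg_trans hIa hIτ₀) hIlam
        exact halam ▸ hIa

end KGraph
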